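/- Let n ≥ 1, y¹, y² ∈ X and x¹ ∈ X with T^n(x¹) = y¹. Then there exists x² ∈ X with T^n(x²) = y², x¹ − x² ∈ E_n, and ‖T^j(x¹) − T^j(x²)‖ ≤ p(T^{n−j})^{−1} ‖y¹ − y²‖ for every 0 ≤ j ≤ n−1. Consequently, for every α-Hölder A : X → ℝ, |S_n A(x¹) − S_n A(x²)| ≤ Hol_A · ( Σ_{j=1}^{n} p(T^j)^{−α} ) · ‖y¹ − y²‖^α. -/

import Mathlib

open MeasureTheory Real Filter

/-- `p(T^n) := inf { ‖T^n x‖ : x ∈ E_n, ‖x‖ = 1 }` for `n ≥ 1`, and `p(T^0) := 1`. -/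
noncomputable def pT {X : Type*} [NormedAddCommGroup X] [NormedSpace ℝ X]
    (T : X →L[ℝ] X) (E : ℕ → Submodule ℝ X) (n : ℕ) : ℝ :=
  if n = 0 then 1 else sInf { r : ℝ | ∃ x ∈ E n, ‖x‖ = 1 ∧ r = ‖(T ^ n) x‖ }

lemma pT_mul_le {X : Type*} [NormedAddCommGroup X] [NormedSpace ℝ X]
    (T : X →L[ℝ] X) (E : ℕ → Submodule ℝ X) (m : ℕ) (hm : 1 ≤ m)
    (u : X) (hu : u ∈ E m) : pT T E m * ‖u‖ ≤ ‖(T ^ m) u‖ := by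
  rcases eq_or_ne u 0 with rfl | hu0
  · simp
  · have hc : (0:ℝ) < ‖u‖ := norm_pos_iff.mpr hu0
    have hmem : ‖(T ^ m) ((‖u‖⁻¹) • u)‖ ∈ { r : ℝ | ∃ x ∈ E m, ‖x‖ = 1 ∧ r = ‖(T ^ m) x‖ } := by
      exact ⟨(‖u‖⁻¹) • u, E m |>.smul_mem _ hu, by
        simp [norm_smul, abs_of_pos (inv_pos.mpr hc), inv_mul_cancel₀ hc.ne'], rfl⟩
    have hbdd : BddBelow { r : ℝ | ∃ x ∈ E m, ‖x‖ = 1 ∧ r = ‖(T ^ m) x‖ } :=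
      ⟨0, fun r ⟨x, _, _, hr⟩ => hr ▸ norm_nonneg _⟩
    have h1 : pT T E m ≤ ‖(T ^ m) ((‖u‖⁻¹) • u)‖ := by
      rw [pT, if_neg (by omega)]
      exact csInf_le hbdd hmem
    have h2 : ‖(T ^ m) ((‖u‖⁻¹) • u)‖ = ‖u‖⁻¹ * ‖(T ^ m) u‖ := by
      rw [_root_.map_smul, norm_smul, norm_inv, norm_norm]
    rw [h2] at h1
    calc pT T E m * ‖u‖ = ‖u‖ * pT T E m := mul_comm _ _
      _ ≤ ‖u‖ * (‖u‖⁻¹ * ‖(T ^ m) u‖) := mul_le_mul_of_nonneg_left h1 hc.le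
      _ = ‖(T ^ m) u‖ := by field_simp

theorem stmt13 {X : Type*} [NormedAddCommGroup X] [NormedSpace ℝ X] [CompleteSpace X]
    (T : X →L[ℝ] X) (hTsurj : Function.Surjective T) (hTinj : ¬ Function.Injective T)
    (hfd : FiniteDimensional ℝ (LinearMap.ker (T : X →ₗ[ℝ] X))) (hpos : 0 < Module.finrank ℝ (LinearMap.ker (T : X →ₗ[ℝ] X)))
    (E : ℕ → Submodule ℝ X)
    (hEclosed : ∀ n, 1 ≤ n → IsClosed ((E n : Set X)))
    (hEcompl : ∀ n, 1 ≤ n → IsCompl (LinearMap.ker ((T ^ n : X →L[ℝ] X) : X →ₗ[ℝ] X)) (E n))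
    (hEmap : ∀ n, 1 ≤ n → ∀ u ∈ E (n + 1), T u ∈ E n)
    (hppos : ∀ n, 1 ≤ n → 0 < pT T E n)
    (n : ℕ) (hn : 1 ≤ n) (y₁ y₂ x₁ : X) (hx₁ : (T ^ n) x₁ = y₁) :
    ∃ x₂ : X, (T ^ n) x₂ = y₂ ∧ x₁ - x₂ ∈ E n ∧
      (∀ j < n, ‖(T ^ j) x₁ - (T ^ j) x₂‖ ≤ (pT T E (n - j))⁻¹ * ‖y₁ - y₂‖) ∧
      ∀ (α : ℝ), 0 < α → α ≤ 1 → ∀ (A : X → ℝ) (CA : ℝ),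
        (∀ a b, |A a - A b| ≤ CA * ‖a - b‖ ^ α) →
        |∑ j ∈ Finset.range n, A ((T ^ j) x₁) - ∑ j ∈ Finset.range n, A ((T ^ j) x₂)| ≤
          CA * (∑ j ∈ Finset.range n, pT T E (j + 1) ^ (-α)) * ‖y₁ - y₂‖ ^ α := by
  -- T^n is surjective
  have hsurj : ∀ m : ℕ, Function.Surjective (T ^ m) := by
    intro m
    induction m with
    | zero => simpa using Function.surjective_id
    | succ k ih =>
        have : (T ^ (k+1) : X →L[ℝ] X) = T ^ k * T := by rw [pow_succ]
        rw [this]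
        exact fun z => by
          obtain ⟨w, hw⟩ := ih z
          obtain ⟨v, hv⟩ := hTsurj w
          exact ⟨v, by simp [ContinuousLinearMap.mul_apply, hv, hw]⟩
  -- find e ∈ E n with T^n e = y₁ - y₂
  obtain ⟨v, hv⟩ := hsurj n (y₁ - y₂)
  obtain ⟨k, e, hk, he, hke⟩ := Submodule.codisjoint_iff_exists_add_eq.mp (hEcompl n hn).codisjoint v
  have hTe : (T ^ n) e = y₁ - y₂ := by
    have h := congrArg (T ^ n) hke
    rwa [_root_.map_add, (show (T ^ n) k = 0 from LinearMap.mem_ker.mp hk), zero_add, hv] at h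
  -- membership of iterates
  have hmemE : ∀ j, j < n → (T ^ j) e ∈ E (n - j) := by
    intro j
    induction j with
    | zero => intro _; simpa using he
    | succ i ih =>
        intro hij
        have hi : i < n := Nat.lt_of_succ_lt hij
        have h1 : (T ^ (i + 1)) e = T ((T ^ i) e) := by
          rw [pow_succ', ContinuousLinearMap.mul_apply]
        have h2 : n - i = (n - (i + 1)) + 1 := by omega
        have hmem : (T ^ i) e ∈ E ((n - (i + 1)) + 1) := h2 ▸ ih hi
        have := hEmap (n - (i + 1)) (by omega) _ hmem
        rw [h1]; exact this
  -- key estimate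
  have hkey : ∀ j, j < n → ‖(T ^ j) e‖ ≤ (pT T E (n - j))⁻¹ * ‖y₁ - y₂‖ := by
    intro j hj
    have hp : 0 < pT T E (n - j) := hppos _ (by omega)
    have hcomp : (T ^ (n - j)) ((T ^ j) e) = (T ^ n) e := by
      rw [← ContinuousLinearMap.mul_apply, ← pow_add, Nat.sub_add_cancel hj.le]
    have h1 : pT T E (n - j) * ‖(T ^ j) e‖ ≤ ‖y₁ - y₂‖ := by
      have := pT_mul_le T E (n - j) (by omega) _ (hmemE j hj)
      rwa [hcomp, hTe] at this
    calc ‖(T ^ j) e‖ = (pT T E (n - j))⁻¹ * (pT T E (n - j) * ‖(T ^ j) e‖) := by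
          field_simp
      _ ≤ (pT T E (n - j))⁻¹ * ‖y₁ - y₂‖ :=
          mul_le_mul_of_nonneg_left h1 (inv_nonneg.mpr hp.le)
  have hdiff : ∀ j : ℕ, (T ^ j) x₁ - (T ^ j) (x₁ - e) = (T ^ j) e := by
    intro j; rw [_root_.map_sub]; abel
  refine ⟨x₁ - e, ?_, by simpa using he, ?_, ?_⟩
  · rw [_root_.map_sub, hx₁, hTe]; abel
  · intro j hj
    rw [hdiff j]
    exact hkey j hj
  · intro α hα0 hα1 A CA hA
    -- CA is nonnegative
    obtain ⟨a, b, hab, hne⟩ := Function.not_injective_iff.mp hTinj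
    have hCA : 0 ≤ CA := by
      have h1 := hA a b
      have h2 : (0:ℝ) < ‖a - b‖ ^ α :=
        Real.rpow_pos_of_pos (norm_pos_iff.mpr (sub_ne_zero.mpr hne)) α
      nlinarith [abs_nonneg (A a - A b)]
    have hterm : ∀ j ∈ Finset.range n,
        |A ((T ^ j) x₁) - A ((T ^ j) (x₁ - e))| ≤
          CA * pT T E (n - j) ^ (-α) * ‖y₁ - y₂‖ ^ α := by
      intro j hj
      rw [Finset.mem_range] at hj
      have hp : 0 < pT T E (n - j) := hppos _ (by omega)
      calc |A ((T ^ j) x₁) - A ((T ^ j) (x₁ - e))|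
          ≤ CA * ‖(T ^ j) x₁ - (T ^ j) (x₁ - e)‖ ^ α := hA _ _
        _ = CA * ‖(T ^ j) e‖ ^ α := by rw [hdiff j]
        _ ≤ CA * ((pT T E (n - j))⁻¹ * ‖y₁ - y₂‖) ^ α := by
            exact mul_le_mul_of_nonneg_left
              (Real.rpow_le_rpow (norm_nonneg _) (hkey j hj) hα0.le) hCA
        _ = CA * pT T E (n - j) ^ (-α) * ‖y₁ - y₂‖ ^ α := by
            rw [Real.mul_rpow (inv_nonneg.mpr hp.le) (norm_nonneg _),
              Real.inv_rpow hp.le, ← Real.rpow_neg hp.le, mul_assoc]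
    have hre : ∑ j ∈ Finset.range n, pT T E (n - j) ^ (-α)
        = ∑ j ∈ Finset.range n, pT T E (j + 1) ^ (-α) := by
      rw [← Finset.sum_range_reflect (fun j => pT T E (j + 1) ^ (-α)) n]
      refine Finset.sum_congr rfl fun j hj => ?_
      rw [Finset.mem_range] at hj
      have : n - 1 - j + 1 = n - j := by omega
      rw [this]
    calc |∑ j ∈ Finset.range n, A ((T ^ j) x₁) - ∑ j ∈ Finset.range n, A ((T ^ j) (x₁ - e))|
        = |∑ j ∈ Finset.range n, (A ((T ^ j) x₁) - A ((T ^ j) (x₁ - e)))| := by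
          rw [Finset.sum_sub_distrib]
      _ ≤ ∑ j ∈ Finset.range n, |A ((T ^ j) x₁) - A ((T ^ j) (x₁ - e))| :=
          Finset.abs_sum_le_sum_abs _ _
      _ ≤ ∑ j ∈ Finset.range n, CA * pT T E (n - j) ^ (-α) * ‖y₁ - y₂‖ ^ α :=
          Finset.sum_le_sum hterm
      _ = CA * (∑ j ∈ Finset.range n, pT T E (n - j) ^ (-α)) * ‖y₁ - y₂‖ ^ α := by
          rw [Finset.mul_sum, Finset.sum_mul]
      _ = CA * (∑ j ∈ Finset.range n, pT T E (j + 1) ^ (-α)) * ‖y₁ - y₂‖ ^ α := by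
          rw [hre]
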